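/- If a connected graph G has Edge-compelling chromatic number 3, then the diameter of G is at most 5. -/
import Mathlib


open SimpleGraph

/-- A proper coloring of `G` with `k` colors. -/
def ProperColoring {V : Type*} {k : ℕ} (G : SimpleGraph V) (c : V → Fin k) : Prop :=
  ∀ ⦃u v : V⦄, G.Adj u v → c u ≠ c v

/-- `f` selects a rainbow committee of the coloring `c`: one vertex of each color. -/
def IsRainbow {V : Type*} {k : ℕ} (c : V → Fin k) (f : Fin k → V) : Prop :=
  ∀ i : Fin k, c (f i) = i

/-- The coloring `c` compels property `P`: every rainbow committee has property `P`. -/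
def Compels {V : Type*} {k : ℕ} (c : V → Fin k) (P : Set V → Prop) : Prop :=
  ∀ f : Fin k → V, IsRainbow c f → P (Set.range f)

/-- The `P`-compelling chromatic number of `G`: the least number of colors in a proper
coloring, using every color, in which every rainbow committee has property `P`. -/
noncomputable def compellingChromNum {V : Type*} (G : SimpleGraph V) (P : Set V → Prop) : ℕ :=
  sInf {k : ℕ | ∃ c : V → Fin k,
    ProperColoring G c ∧ Function.Surjective c ∧ Compels c P}

/-- Property `Edge`: the set contains at least one edge of `G`. -/
def HasEdge {V : Type*} (G : SimpleGraph V) (S : Set V) : Prop :=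
  ∃ u ∈ S, ∃ v ∈ S, G.Adj u v

/-- The Edge-compelling chromatic number. -/
noncomputable def edgeCompellingChromNum {V : Type*} (G : SimpleGraph V) : ℕ :=
  compellingChromNum G (HasEdge G)

/- ## Auxiliary decidable combinatorial lemmas -/

set_option maxRecDepth 40000 in
set_option synthInstance.maxSize 4000 in
set_option synthInstance.maxHeartbeats 2000000 in
private lemma aux_two_colored' : ∀ c0 c1 c2 c3 c4 c5 c6 : Fin 3,
    c0 ≠ c1 → c1 ≠ c2 → c2 ≠ c3 → c3 ≠ c4 → c4 ≠ c5 → c5 ≠ c6 →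
    (c0 = c2 ∨ c0 = c4 ∨ c2 = c4) →
    (c0 = c2 ∨ c0 = c5 ∨ c2 = c5) →
    (c0 = c2 ∨ c0 = c6 ∨ c2 = c6) →
    (c0 = c3 ∨ c0 = c5 ∨ c3 = c5) →
    (c0 = c3 ∨ c0 = c6 ∨ c3 = c6) →
    (c0 = c4 ∨ c0 = c6 ∨ c4 = c6) →
    (c1 = c3 ∨ c1 = c5 ∨ c3 = c5) →
    (c1 = c3 ∨ c1 = c6 ∨ c3 = c6) →
    (c1 = c4 ∨ c1 = c6 ∨ c4 = c6) →
    (c2 = c4 ∨ c2 = c6 ∨ c4 = c6) →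
    ∃ γ : Fin 3, c0 ≠ γ ∧ c1 ≠ γ ∧ c2 ≠ γ ∧ c3 ≠ γ ∧ c4 ≠ γ ∧ c5 ≠ γ ∧ c6 ≠ γ := by decide

set_option maxRecDepth 40000 in
set_option synthInstance.maxSize 4000 in
set_option synthInstance.maxHeartbeats 2000000 in
private lemma aux_window' : ∀ c0 c1 c2 c3 c4 c5 c6 n0 n1 n2 n3 n4 n5 n6 : Bool,
    c0 ≠ c1 → c1 ≠ c2 → c2 ≠ c3 → c3 ≠ c4 → c4 ≠ c5 → c5 ≠ c6 →
    ¬(n0 = true ∧ n3 = true) →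
    ¬(n0 = true ∧ n4 = true) →
    ¬(n0 = true ∧ n5 = true) →
    ¬(n0 = true ∧ n6 = true) →
    ¬(n1 = true ∧ n4 = true) →
    ¬(n1 = true ∧ n5 = true) →
    ¬(n1 = true ∧ n6 = true) →
    ¬(n2 = true ∧ n5 = true) →
    ¬(n2 = true ∧ n6 = true) →
    ¬(n3 = true ∧ n6 = true) →
    (c0 ≠ c2 → (n0 = true ∨ n2 = true)) →
    (c0 ≠ c3 → (n0 = true ∨ n3 = true)) →
    (c0 ≠ c4 → (n0 = true ∨ n4 = true)) →
    (c0 ≠ c5 → (n0 = true ∨ n5 = true)) →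
    (c0 ≠ c6 → (n0 = true ∨ n6 = true)) →
    (c1 ≠ c3 → (n1 = true ∨ n3 = true)) →
    (c1 ≠ c4 → (n1 = true ∨ n4 = true)) →
    (c1 ≠ c5 → (n1 = true ∨ n5 = true)) →
    (c1 ≠ c6 → (n1 = true ∨ n6 = true)) →
    (c2 ≠ c4 → (n2 = true ∨ n4 = true)) →
    (c2 ≠ c5 → (n2 = true ∨ n5 = true)) →
    (c2 ≠ c6 → (n2 = true ∨ n6 = true)) →
    (c3 ≠ c5 → (n3 = true ∨ n5 = true)) →
    (c3 ≠ c6 → (n3 = true ∨ n6 = true)) →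
    (c4 ≠ c6 → (n4 = true ∨ n6 = true)) →
    False := by decide

private lemma aux_fin3_unique : ∀ a b w i : Fin 3,
    a ≠ b → w ≠ a → w ≠ b → i ≠ a → i ≠ b → w = i := by decide

private lemma aux_fin3_decide : ∀ a b t γ : Fin 3,
    a ≠ b → a ≠ γ → b ≠ γ → t ≠ γ → decide (a = t) ≠ decide (b = t) := by decide

/-- From a rainbow triple, compelling yields an edge among the three vertices. -/
private lemma rainbow_edge {V : Type*} {G : SimpleGraph V} {c : V → Fin 3}
    (hcomp : Compels c (HasEdge G)) (a b w : V)
    (hab : c a ≠ c b) (haw : c a ≠ c w) (hbw : c b ≠ c w) :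
    G.Adj a b ∨ G.Adj a w ∨ G.Adj b w := by
  classical
  set f : Fin 3 → V := fun i => if i = c a then a else if i = c b then b else w with hf
  have hfa : ∀ i, i = c a → f i = a := fun i h1 => by
    simp only [hf]; rw [if_pos h1]
  have hfb : ∀ i, i ≠ c a → i = c b → f i = b := fun i h1 h2 => by
    simp only [hf]; rw [if_neg h1, if_pos h2]
  have hfw : ∀ i, i ≠ c a → i ≠ c b → f i = w := fun i h1 h2 => by
    simp only [hf]; rw [if_neg h1, if_neg h2]
  have hmem : ∀ i, f i = a ∨ f i = b ∨ f i = w := by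
    intro i
    by_cases h1 : i = c a
    · left; exact hfa i h1
    · by_cases h2 : i = c b
      · right; left; exact hfb i h1 h2
      · right; right; exact hfw i h1 h2
  have hrain : IsRainbow c f := by
    intro i
    by_cases h1 : i = c a
    · rw [hfa i h1]; exact h1.symm
    · by_cases h2 : i = c b
      · rw [hfb i h1 h2]; exact h2.symm
      · rw [hfw i h1 h2]
        exact aux_fin3_unique (c a) (c b) (c w) i hab (Ne.symm haw) (Ne.symm hbw) h1 h2
  obtain ⟨p, hp, q, hq, hpq⟩ := hcomp f hrain
  obtain ⟨i, hi⟩ := hp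
  obtain ⟨j, hj⟩ := hq
  have hp' := hmem i; rw [hi] at hp'
  have hq' := hmem j; rw [hj] at hq'
  rcases hp' with rfl | rfl | rfl <;> rcases hq' with rfl | rfl | rfl <;>
    first
      | exact (G.irrefl hpq).elim
      | exact Or.inl hpq
      | exact Or.inl hpq.symm
      | exact Or.inr (Or.inl hpq)
      | exact Or.inr (Or.inl hpq.symm)
      | exact Or.inr (Or.inr hpq)
      | exact Or.inr (Or.inr hpq.symm)

/-- The key structural lemma: with a surjective proper compelling 3-coloring there is
no "geodesic-like" sequence of 7 vertices. -/
private lemma key {V : Type*} {G : SimpleGraph V} {c : V → Fin 3}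
    (hprop : ProperColoring G c) (hsurj : Function.Surjective c)
    (hcomp : Compels c (HasEdge G)) (x : Fin 7 → V)
    (hadj : ∀ i j : Fin 7, (i : ℕ) + 1 = (j : ℕ) → G.Adj (x i) (x j))
    (hfar : ∀ i j : Fin 7, (i : ℕ) + 2 ≤ (j : ℕ) → ¬ G.Adj (x i) (x j))
    (hfar3 : ∀ i j : Fin 7, (i : ℕ) + 3 ≤ (j : ℕ) →
      ∀ w, ¬(G.Adj (x i) w ∧ G.Adj w (x j))) :
    False := by
  classical
  have hcol : ∀ i j : Fin 7, (i : ℕ) + 1 = (j : ℕ) → c (x i) ≠ c (x j) :=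
    fun i j hij => hprop (hadj i j hij)
  have hspread : ∀ i j k : Fin 7, (i : ℕ) + 2 ≤ (j : ℕ) → (j : ℕ) + 2 ≤ (k : ℕ) →
      (c (x i) = c (x j) ∨ c (x i) = c (x k) ∨ c (x j) = c (x k)) := by
    intro i j k hij hjk
    by_contra hcon
    push_neg at hcon
    obtain ⟨h1, h2, h3⟩ := hcon
    rcases rainbow_edge hcomp (x i) (x j) (x k) h1 h2 h3 with he | he | he
    · exact hfar i j hij he
    · exact hfar i k (by omega) he
    · exact hfar j k hjk he
  obtain ⟨γ, hγ0, hγ1, hγ2, hγ3, hγ4, hγ5, hγ6⟩ :=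
    aux_two_colored' (c (x 0)) (c (x 1)) (c (x 2)) (c (x 3)) (c (x 4)) (c (x 5)) (c (x 6))
      (hcol 0 1 (by decide)) (hcol 1 2 (by decide)) (hcol 2 3 (by decide)) (hcol 3 4 (by decide)) (hcol 4 5 (by decide)) (hcol 5 6 (by decide))
      (hspread 0 2 4 (by decide) (by decide)) (hspread 0 2 5 (by decide) (by decide)) (hspread 0 2 6 (by decide) (by decide)) (hspread 0 3 5 (by decide) (by decide)) (hspread 0 3 6 (by decide) (by decide)) (hspread 0 4 6 (by decide) (by decide)) (hspread 1 3 5 (by decide) (by decide)) (hspread 1 3 6 (by decide) (by decide)) (hspread 1 4 6 (by decide) (by decide)) (hspread 2 4 6 (by decide) (by decide))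
  have hγ : ∀ i : Fin 7, c (x i) ≠ γ := by
    intro i
    fin_cases i <;>
      first | exact hγ0 | exact hγ1 | exact hγ2 | exact hγ3 | exact hγ4 | exact hγ5 | exact hγ6
  obtain ⟨w, hw⟩ := hsurj γ
  set n : Fin 7 → Bool := fun i => decide (G.Adj w (x i)) with hn
  set c' : Fin 7 → Bool := fun i => decide (c (x i) = c (x 0)) with hc'
  have hcons : ∀ i j : Fin 7, (i : ℕ) + 1 = (j : ℕ) → c' i ≠ c' j := by
    intro i j hij
    exact aux_fin3_decide (c (x i)) (c (x j)) (c (x 0)) γ (hcol i j hij) (hγ i) (hγ j) (hγ 0)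
  have hwin : ∀ i j : Fin 7, (i : ℕ) + 3 ≤ (j : ℕ) → ¬(n i = true ∧ n j = true) := by
    intro i j hij hcon
    obtain ⟨h1, h2⟩ := hcon
    have h1' : G.Adj w (x i) := of_decide_eq_true h1
    have h2' : G.Adj w (x j) := of_decide_eq_true h2
    exact hfar3 i j hij w ⟨h1'.symm, h2'⟩
  have hcov : ∀ i j : Fin 7, (i : ℕ) + 2 ≤ (j : ℕ) → c' i ≠ c' j → (n i = true ∨ n j = true) := by
    intro i j hij hcij
    have hcc : c (x i) ≠ c (x j) := by
      intro heq
      apply hcij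
      simp only [hc', heq]
    have hiw : c (x i) ≠ c w := by rw [hw]; exact hγ i
    have hjw : c (x j) ≠ c w := by rw [hw]; exact hγ j
    rcases rainbow_edge hcomp (x i) (x j) w hcc hiw hjw with he | he | he
    · exact absurd he (hfar i j hij)
    · left; exact decide_eq_true he.symm
    · right; exact decide_eq_true he.symm
  exact aux_window' (c' 0) (c' 1) (c' 2) (c' 3) (c' 4) (c' 5) (c' 6) (n 0) (n 1) (n 2) (n 3) (n 4) (n 5) (n 6)
      (hcons 0 1 (by decide)) (hcons 1 2 (by decide)) (hcons 2 3 (by decide)) (hcons 3 4 (by decide)) (hcons 4 5 (by decide)) (hcons 5 6 (by decide))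
      (hwin 0 3 (by decide)) (hwin 0 4 (by decide)) (hwin 0 5 (by decide)) (hwin 0 6 (by decide)) (hwin 1 4 (by decide)) (hwin 1 5 (by decide)) (hwin 1 6 (by decide)) (hwin 2 5 (by decide)) (hwin 2 6 (by decide)) (hwin 3 6 (by decide))
      (hcov 0 2 (by decide)) (hcov 0 3 (by decide)) (hcov 0 4 (by decide)) (hcov 0 5 (by decide)) (hcov 0 6 (by decide)) (hcov 1 3 (by decide)) (hcov 1 4 (by decide)) (hcov 1 5 (by decide)) (hcov 1 6 (by decide)) (hcov 2 4 (by decide)) (hcov 2 5 (by decide)) (hcov 2 6 (by decide)) (hcov 3 5 (by decide)) (hcov 3 6 (by decide)) (hcov 4 6 (by decide))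

private lemma dist_getVert_le {V : Type*} {G : SimpleGraph V} (hconn : G.Connected)
    {u v : V} (p : G.Walk u v) : ∀ i : ℕ, G.dist u (p.getVert i) ≤ i := by
  intro i
  induction i with
  | zero => simp [SimpleGraph.Walk.getVert_zero, SimpleGraph.dist_self]
  | succ i ih =>
    by_cases hi : i < p.length
    · have hA : G.Adj (p.getVert i) (p.getVert (i + 1)) := p.adj_getVert_succ hi
      have h1 : G.dist (p.getVert i) (p.getVert (i + 1)) = 1 :=
        SimpleGraph.dist_eq_one_iff_adj.mpr hA
      calc G.dist u (p.getVert (i + 1))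
          ≤ G.dist u (p.getVert i) + G.dist (p.getVert i) (p.getVert (i + 1)) :=
            hconn.dist_triangle
        _ ≤ i + 1 := by rw [h1]; omega
    · have hlen : p.length ≤ i := by omega
      have : p.getVert (i + 1) = p.getVert i := by
        rw [p.getVert_of_length_le hlen, p.getVert_of_length_le (by omega)]
      rw [this]
      exact le_trans ih (by omega)

/-- A connected graph with Edge-compelling chromatic number 3 has diameter at most 5. -/
theorem diameter_le_five_of_edgeCompellingChromNum_eq_three {V : Type*} [Fintype V]
    (G : SimpleGraph V) (hconn : G.Connected) (h : edgeCompellingChromNum G = 3) :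
    ∀ u v : V, G.dist u v ≤ 5 := by
  classical
  -- extract the coloring
  have hS : ({k : ℕ | ∃ c : V → Fin k,
      ProperColoring G c ∧ Function.Surjective c ∧ Compels c (HasEdge G)}).Nonempty := by
    by_contra hempty
    rw [Set.not_nonempty_iff_eq_empty] at hempty
    have : edgeCompellingChromNum G = 0 := by
      unfold edgeCompellingChromNum compellingChromNum
      rw [hempty]
      exact Nat.sInf_empty
    omega
  have hmem : (3 : ℕ) ∈ {k : ℕ | ∃ c : V → Fin k,
      ProperColoring G c ∧ Function.Surjective c ∧ Compels c (HasEdge G)} := by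
    have := Nat.sInf_mem hS
    unfold edgeCompellingChromNum compellingChromNum at h
    rwa [h] at this
  obtain ⟨c, hprop, hsurj, hcomp⟩ := hmem
  intro u v
  by_contra hlt
  push_neg at hlt
  have hd6 : 6 ≤ G.dist u v := hlt
  obtain ⟨p, hp⟩ := hconn.exists_walk_length_eq_dist u v
  have hplen : 6 ≤ p.length := by omega
  -- distances along the walk
  have hpre : ∀ i : ℕ, G.dist u (p.getVert i) ≤ i := dist_getVert_le hconn p
  have hsuf : ∀ j : ℕ, j ≤ p.length → G.dist (p.getVert j) v ≤ p.length - j := by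
    intro j hj
    have h1 : p.reverse.getVert (p.length - j) = p.getVert j := by
      rw [p.getVert_reverse]
      congr 1
      omega
    have h2 := dist_getVert_le hconn p.reverse (p.length - j)
    rw [h1] at h2
    rw [SimpleGraph.dist_comm]
    exact h2
  have hgap : ∀ i j : ℕ, i ≤ j → j ≤ p.length → (j - i) ≤ G.dist (p.getVert i) (p.getVert j) := by
    intro i j hij hj
    have ht : G.dist u v ≤ G.dist u (p.getVert i) + G.dist (p.getVert i) (p.getVert j)
        + G.dist (p.getVert j) v := le_trans hconn.dist_triangle
      (by exact Nat.add_le_add_right hconn.dist_triangle _)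
    have h1 := hpre i
    have h2 := hsuf j hj
    omega
  -- assemble sequence
  set x : Fin 7 → V := fun i => p.getVert (i : ℕ) with hx
  apply key hprop hsurj hcomp x
  · intro i j hij
    have : (i : ℕ) < p.length := by have := i.isLt; omega
    have hA := p.adj_getVert_succ this
    simp only [hx]
    rw [hij] at hA
    exact hA
  · intro i j hij hA
    have hdist : G.dist (p.getVert (i : ℕ)) (p.getVert (j : ℕ)) = 1 :=
      SimpleGraph.dist_eq_one_iff_adj.mpr hA
    have := hgap i j (by omega) (by have := j.isLt; omega)
    omega
  · intro i j hij w hA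
    obtain ⟨h1, h2⟩ := hA
    have hd1 : G.dist (p.getVert (i : ℕ)) w = 1 := SimpleGraph.dist_eq_one_iff_adj.mpr h1
    have hd2 : G.dist w (p.getVert (j : ℕ)) = 1 := SimpleGraph.dist_eq_one_iff_adj.mpr h2
    have ht : G.dist (p.getVert (i : ℕ)) (p.getVert (j : ℕ)) ≤
        G.dist (p.getVert (i : ℕ)) w + G.dist w (p.getVert (j : ℕ)) := hconn.dist_triangle
    have := hgap i j (by omega) (by have := j.isLt; omega)
    omega
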